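/- Let I be a nontrivial real interval (nonempty and not a singleton). A standard function F : I* → ℝ is preassociative and unarily quasi-range-idempotent with F₁ and F₂ continuous and one-to-one in each argument if and only if there exist a real interval J of one of the forms ]−∞, b[, ]−∞, b], ]a, ∞[, [a, ∞[ or ℝ (with b ≤ 0 ≤ a) and continuous strictly monotonic functions φ : I → J and ψ : J → ℝ such that Fₙ(x₁, …, xₙ) = ψ(φ(x₁) + ⋯ + φ(xₙ)) for every n ≥ 1. For such an F one has ψ = F₁ ∘ φ⁻¹, and φ can be chosen strictly increasing. -/

import Mathlib

/-! Variadic functions on tuples (modeled as lists). -/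

variable {X Y Y' : Type*}

/-- A variadic function `F` is *standard* if `F x = F []` only for `x = []`. -/
def VStandard (F : List X → Y) : Prop := ∀ x : List X, F x = F [] → x = []

/-- An operation `F : X* → X ∪ {ε}` is *ε-standard* if it is standard and `F ε = ε`. -/
def VEpsStandard (F : List X → Option X) : Prop := VStandard F ∧ F [] = none

/-- `F` is *associative*: `F (x, y, z) = F (x, F y, z)`, where inserting the value `F y`
means inserting the one-element tuple if `F y ∈ X` and nothing if `F y = ε`. -/
def VAssoc (F : List X → Option X) : Prop :=
  ∀ x y z : List X, F (x ++ y ++ z) = F (x ++ (F y).toList ++ z)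

/-- `F` is *preassociative*: `F y = F y'` implies `F (x ++ y ++ z) = F (x ++ y' ++ z)`. -/
def VPreassoc (F : List X → Y) : Prop :=
  ∀ x y y' z : List X, F y = F y' → F (x ++ y ++ z) = F (x ++ y' ++ z)

/-- The range of the unary part `F₁` of `F`. -/
def VRanUnary (F : List X → Y) : Set Y := Set.range fun a : X => F [a]

/-- The range of `F^♭`, the restriction of `F` to nonempty tuples. -/
def VRanFlat (F : List X → Y) : Set Y := {y | ∃ x : List X, x ≠ [] ∧ F x = y}

/-- `F` is *unarily quasi-range-idempotent*: `ran F₁ = ran F^♭`. -/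
def VUnQRI (F : List X → Y) : Prop := VRanUnary F = VRanFlat F

/-- An operation `F` is *unarily range-idempotent*: `F (F x) = F x` for nonempty `x`,
with the convention for inserting values into tuples. -/
def VUnRI (F : List X → Option X) : Prop :=
  ∀ x : List X, x ≠ [] → F (F x).toList = F x

/-- `g` is a *quasi-inverse* of `f`. -/
def VQuasiInv (f : X → Y) (g : Y → X) : Prop :=
  (∀ y ∈ Set.range f, f (g y) = y) ∧ g '' Set.range f = Set.range g

/-- The set of elements of `X` attained by an operation `H` on nonempty tuples. -/
def VRanFlatOp (H : List X → Option X) : Set X :=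
  {a : X | ∃ x : List X, x ≠ [] ∧ H x = some a}

/-- An operation `F` is *range-idempotent* if `F (k·y) = y` for every `y ∈ ran F^♭ ∩ X`
and every `k ≥ 1`. -/
def VRangeIdem (F : List X → Option X) : Prop :=
  ∀ y : X, some y ∈ VRanFlat F → ∀ k : ℕ, 1 ≤ k → F (List.replicate k y) = some y

/-- The ternary median in a chain. -/
def med3 {Z : Type*} [LinearOrder Z] (x y z : Z) : Z :=
  min (min (max x y) (max y z)) (max z x)

open Set Filter Topology
set_option linter.unusedSectionVars false


namespace Acz

variable {α : Type*} [ConditionallyCompleteLinearOrder α] [DenselyOrdered α]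
  [TopologicalSpace α] [OrderTopology α]

/-- structural hypotheses on a continuous cancellative associative operation -/
structure ASemi (h : α → α → α) : Prop where
  assoc : ∀ a b c, h (h a b) c = h a (h b c)
  cont1 : ∀ b, Continuous fun a => h a b
  cont2 : ∀ a, Continuous fun b => h a b
  contJ : Continuous fun q : α × α => h q.1 q.2
  mono1 : ∀ b, StrictMono fun a => h a b
  mono2 : ∀ a, StrictMono fun b => h a b

variable (h : α → α → α)

/-- `apow h x n = x^(n+1)` -/
def apow (x : α) : ℕ → α
  | 0 => x
  | n + 1 => h x (apow x n)

variable {h}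

section Basic

variable (G : ASemi h) (pos : ∀ x z : α, z < h x z ∧ z < h z x)
include G

lemma h_le_h {a b a' b' : α} (h1 : a ≤ a') (h2 : b ≤ b') : h a b ≤ h a' b' :=
  le_trans ((G.mono1 b).monotone h1) ((G.mono2 a').monotone h2)

lemma apow_add (x : α) (m n : ℕ) :
    apow h x (m + n + 1) = h (apow h x m) (apow h x n) := by
  induction m with
  | zero => simp [apow, Nat.zero_add]
  | succ m ih =>
      have : m + 1 + n + 1 = (m + n + 1) + 1 := by omega
      rw [this]
      show h x (apow h x (m + n + 1)) = _
      rw [ih, ← G.assoc]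
      rfl

lemma apow_base_mono {x y : α} (hxy : x ≤ y) (n : ℕ) : apow h x n ≤ apow h y n := by
  induction n with
  | zero => exact hxy
  | succ n ih => exact h_le_h G hxy ih

lemma apow_comp (x : α) (m k : ℕ) :
    apow h (apow h x m) k = apow h x ((m + 1) * (k + 1) - 1) := by
  induction k with
  | zero =>
      have e : (m + 1) * (0 + 1) - 1 = m := by omega
      rw [e]
      rfl
  | succ k ih =>
      show h (apow h x m) (apow h (apow h x m) k) = _
      rw [ih, ← apow_add G]
      congr 1
      have h1 : (m + 1) * (k + 1 + 1) = (m + 1) * (k + 1) + (m + 1) := by ring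
      have h2 : 1 ≤ (m + 1) * (k + 1) := Nat.one_le_iff_ne_zero.mpr (by positivity)
      omega

include pos

lemma apow_lt_succ (x : α) (n : ℕ) : apow h x n < apow h x (n + 1) :=
  (pos x (apow h x n)).1

lemma apow_strictMono_exp (x : α) : StrictMono (apow h x) :=
  strictMono_nat_of_lt_succ (apow_lt_succ G pos x)

lemma arch (x u : α) : ∃ n, u < apow h x n := by
  by_contra hc
  push_neg at hc
  set S := Set.range (apow h x) with hS
  have hne : S.Nonempty := ⟨x, 0, rfl⟩
  have hbdd : BddAbove S := ⟨u, by rintro _ ⟨n, rfl⟩; exact hc n⟩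
  set L := sSup S with hL
  have hLc : L ∈ closure S := csSup_mem_closure hne hbdd
  have himg : (fun z => h x z) '' S ⊆ S := by
    rintro _ ⟨_, ⟨n, rfl⟩, rfl⟩; exact ⟨n + 1, rfl⟩
  have h1 : h x L ∈ closure S := by
    refine closure_mono himg ?_
    exact image_closure_subset_closure_image (G.cont2 x) ⟨L, hLc, rfl⟩
  have h2 : closure S ⊆ Iic L :=
    closure_minimal (fun z hz => le_csSup hbdd hz) isClosed_Iic
  exact absurd (h2 h1) (not_le.mpr (pos x L).1)

end Basic

section Nu

variable (h)

/-- number of powers of `c` fitting under `x^(2^j)` -/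
noncomputable def nu (c x : α) (j : ℕ) : ℕ :=
  sSup {m : ℕ | 0 < m ∧ apow h c (m - 1) ≤ apow h x (2 ^ j - 1)}

variable {h}

variable (G : ASemi h) (pos : ∀ x z : α, z < h x z ∧ z < h z x)
include G pos

lemma nu_bddAbove (c x : α) (j : ℕ) :
    BddAbove {m : ℕ | 0 < m ∧ apow h c (m - 1) ≤ apow h x (2 ^ j - 1)} := by
  obtain ⟨K, hK⟩ := arch G pos c (apow h x (2 ^ j - 1))
  refine ⟨K, ?_⟩
  rintro m ⟨hm, hle⟩
  by_contra hcon
  push_neg at hcon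
  have : apow h c K ≤ apow h c (m - 1) :=
    (apow_strictMono_exp G pos c).monotone (by omega)
  exact absurd (le_trans this hle) (not_le.mpr hK)

lemma nu_le {c x : α} {j m : ℕ} (hm : apow h c m ≤ apow h x (2 ^ j - 1)) :
    m + 1 ≤ nu h c x j :=
  le_csSup (nu_bddAbove G pos c x j) ⟨by omega, by simpa using hm⟩

lemma nu_spec {c x : α} {j : ℕ} (hpos : 0 < nu h c x j) :
    apow h c (nu h c x j - 1) ≤ apow h x (2 ^ j - 1) := by
  have hne : {m : ℕ | 0 < m ∧ apow h c (m - 1) ≤ apow h x (2 ^ j - 1)}.Nonempty := by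
    by_contra hne
    rw [Set.not_nonempty_iff_eq_empty] at hne
    simp [nu, hne] at hpos
  have := Nat.sSup_mem hne (nu_bddAbove G pos c x j)
  exact this.2

lemma nu_lt (c x : α) (j : ℕ) : apow h x (2 ^ j - 1) < apow h c (nu h c x j) := by
  by_contra hcon
  push_neg at hcon
  have := nu_le G pos hcon
  omega

lemma nu_mono_elem {c x y : α} (hxy : x ≤ y) (j : ℕ) : nu h c x j ≤ nu h c y j := by
  rcases Nat.eq_zero_or_pos (nu h c x j) with h0 | hp
  · omega
  · have h1 := nu_spec G pos (c := c) (x := x) (j := j) hp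
    have h2 : apow h c (nu h c x j - 1) ≤ apow h y (2 ^ j - 1) :=
      le_trans h1 (apow_base_mono G hxy _)
    have := nu_le G pos h2
    omega

lemma Qsucc (x : α) (j : ℕ) :
    apow h x (2 ^ (j + 1) - 1) = h (apow h x (2 ^ j - 1)) (apow h x (2 ^ j - 1)) := by
  have e : (2 ^ j - 1) + (2 ^ j - 1) + 1 = 2 ^ (j + 1) - 1 := by
    have : 1 ≤ 2 ^ j := Nat.one_le_two_pow
    have : 2 ^ (j + 1) = 2 ^ j + 2 ^ j := by rw [pow_succ]; ring
    omega
  rw [← e, apow_add G]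

lemma nu_double (c x : α) (j : ℕ) : 2 * nu h c x j ≤ nu h c x (j + 1) := by
  rcases Nat.eq_zero_or_pos (nu h c x j) with h0 | hp
  · omega
  · set m := nu h c x j
    have h1 : apow h c (m - 1) ≤ apow h x (2 ^ j - 1) := nu_spec G pos hp
    have h2 : apow h c ((m - 1) + (m - 1) + 1) ≤ apow h x (2 ^ (j + 1) - 1) := by
      rw [apow_add G, Qsucc G pos]
      exact h_le_h G h1 h1
    have := nu_le G pos h2
    omega

lemma nu_j_upper {c x : α} {K : ℕ} (hK : x ≤ apow h c K) (j : ℕ) :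
    nu h c x j ≤ (K + 1) * 2 ^ j := by
  have hQ : apow h x (2 ^ j - 1) ≤ apow h c ((K + 1) * 2 ^ j - 1) := by
    have h1 : apow h x (2 ^ j - 1) ≤ apow h (apow h c K) (2 ^ j - 1) :=
      apow_base_mono G hK _
    rw [apow_comp G] at h1
    have h2 : 2 ^ j - 1 + 1 = 2 ^ j := by
      have : 1 ≤ 2 ^ j := Nat.one_le_two_pow
      omega
    rwa [h2] at h1
  rcases Nat.eq_zero_or_pos (nu h c x j) with h0 | hp
  · omega
  · have h1 := nu_spec G pos (c := c) (x := x) (j := j) hp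
    have h3 : apow h c (nu h c x j - 1) ≤ apow h c ((K + 1) * 2 ^ j - 1) := le_trans h1 hQ
    have h4 : nu h c x j - 1 ≤ (K + 1) * 2 ^ j - 1 :=
      (apow_strictMono_exp G pos c).le_iff_le.mp h3
    have h5 : 1 ≤ (K + 1) * 2 ^ j := Nat.one_le_iff_ne_zero.mpr (by positivity)
    omega

lemma nu_i_of_j {c x : α} {i j : ℕ} (hij : j ≤ i) :
    nu h c x i ≤ (nu h c x j + 1) * 2 ^ (i - j) := by
  have e1 : 2 ^ j - 1 + 1 = 2 ^ j := by have : 1 ≤ 2 ^ j := Nat.one_le_two_pow; omega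
  have e2 : 2 ^ (i - j) - 1 + 1 = 2 ^ (i - j) := by
    have : 1 ≤ 2 ^ (i - j) := Nat.one_le_two_pow; omega
  have e3 : 2 ^ j * 2 ^ (i - j) = 2 ^ i := by rw [← pow_add]; congr 1; omega
  have hQ : apow h x (2 ^ i - 1) ≤ apow h c ((nu h c x j + 1) * 2 ^ (i - j) - 1) := by
    have h0 : apow h x (2 ^ i - 1) = apow h (apow h x (2 ^ j - 1)) (2 ^ (i - j) - 1) := by
      rw [apow_comp G, e1, e2, e3]
    have h1 : apow h (apow h x (2 ^ j - 1)) (2 ^ (i - j) - 1)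
        ≤ apow h (apow h c (nu h c x j)) (2 ^ (i - j) - 1) :=
      apow_base_mono G (le_of_lt (nu_lt G pos c x j)) _
    have h2 : apow h (apow h c (nu h c x j)) (2 ^ (i - j) - 1)
        = apow h c ((nu h c x j + 1) * 2 ^ (i - j) - 1) := by
      rw [apow_comp G, e2]
    rw [h0]
    rw [h2] at h1
    exact h1
  rcases Nat.eq_zero_or_pos (nu h c x i) with h0 | hp
  · omega
  · have h1 := nu_spec G pos (c := c) (x := x) (j := i) hp
    have h3 := le_trans h1 hQ
    have h4 := (apow_strictMono_exp G pos c).le_iff_le.mp h3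
    have h5 : 1 ≤ (nu h c x j + 1) * 2 ^ (i - j) := Nat.one_le_iff_ne_zero.mpr (by positivity)
    omega

end Nu

section Words

variable (G : ASemi h)
include G

lemma h_lt_h {a b a' b' : α} (h1 : a < a') (h2 : b < b') : h a b < h a' b' :=
  lt_trans (G.mono1 b h1) (G.mono2 a' h2)

variable {x y : α} (hxy : h x y ≤ h y x)
include hxy

lemma word_xy (k : ℕ) : h x (apow h y k) ≤ h (apow h y k) x := by
  induction k with
  | zero => exact hxy
  | succ k ih =>
      calc h x (apow h y (k + 1)) = h (h x y) (apow h y k) := by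
            rw [show apow h y (k+1) = h y (apow h y k) from rfl, ← G.assoc]
        _ ≤ h (h y x) (apow h y k) := (G.mono1 _).monotone hxy
        _ = h y (h x (apow h y k)) := G.assoc _ _ _
        _ ≤ h y (h (apow h y k) x) := (G.mono2 _).monotone ih
        _ = h (apow h y (k + 1)) x := by
            rw [← G.assoc]; rfl

lemma word_x_y (k : ℕ) : h (apow h x k) y ≤ h y (apow h x k) := by
  induction k with
  | zero => exact hxy
  | succ k ih =>
      calc h (apow h x (k + 1)) y = h x (h (apow h x k) y) := G.assoc _ _ _
        _ ≤ h x (h y (apow h x k)) := (G.mono2 _).monotone ih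
        _ = h (h x y) (apow h x k) := (G.assoc _ _ _).symm
        _ ≤ h (h y x) (apow h x k) := (G.mono1 _).monotone hxy
        _ = h y (apow h x (k + 1)) := by rw [G.assoc]; rfl

lemma word_upper (n : ℕ) : apow h (h x y) n ≤ h (apow h y n) (apow h x n) := by
  induction n with
  | zero => exact hxy
  | succ n ih =>
      calc apow h (h x y) (n + 1) = h (h x y) (apow h (h x y) n) := rfl
        _ ≤ h (h x y) (h (apow h y n) (apow h x n)) := (G.mono2 _).monotone ih
        _ = h (h x (apow h y (n + 1))) (apow h x n) := by
            rw [show apow h y (n + 1) = h y (apow h y n) from rfl,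
              G.assoc x y, ← G.assoc y, ← G.assoc x]
        _ ≤ h (h (apow h y (n + 1)) x) (apow h x n) :=
            (G.mono1 _).monotone (word_xy G hxy (n + 1))
        _ = h (apow h y (n + 1)) (apow h x (n + 1)) := G.assoc _ _ _

lemma word_lower (n : ℕ) : h (apow h x n) (apow h y n) ≤ apow h (h x y) n := by
  induction n with
  | zero => exact le_refl _
  | succ n ih =>
      calc h (apow h x (n + 1)) (apow h y (n + 1))
          = h x (h (h (apow h x n) y) (apow h y n)) := by
            rw [show apow h x (n + 1) = h x (apow h x n) from rfl,
              show apow h y (n + 1) = h y (apow h y n) from rfl,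
              G.assoc x, ← G.assoc (apow h x n)]
        _ ≤ h x (h (h y (apow h x n)) (apow h y n)) :=
            (G.mono2 _).monotone ((G.mono1 _).monotone (word_x_y G hxy n))
        _ = h (h x y) (h (apow h x n) (apow h y n)) := by
            rw [G.assoc y, ← G.assoc x, ← G.assoc (h x y)]
        _ ≤ h (h x y) (apow h (h x y) n) := (G.mono2 _).monotone ih
        _ = apow h (h x y) (n + 1) := rfl

lemma word_upper' (n : ℕ) : apow h (h y x) n ≤ h (apow h y n) (apow h x n) := by
  induction n with
  | zero => exact le_refl _
  | succ n ih =>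
      calc apow h (h y x) (n + 1) = h (h y x) (apow h (h y x) n) := rfl
        _ ≤ h (h y x) (h (apow h y n) (apow h x n)) := (G.mono2 _).monotone ih
        _ = h y (h (h x (apow h y n)) (apow h x n)) := by
            rw [G.assoc y x, ← G.assoc x]
        _ ≤ h y (h (h (apow h y n) x) (apow h x n)) :=
            (G.mono2 _).monotone ((G.mono1 _).monotone (word_xy G hxy n))
        _ = h (apow h y (n + 1)) (apow h x (n + 1)) := by
            rw [show apow h y (n + 1) = h y (apow h y n) from rfl,
              show apow h x (n + 1) = h x (apow h x n) from rfl,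
              G.assoc (apow h y n) x, ← G.assoc y]

lemma word_lower' (n : ℕ) : h (apow h x n) (apow h y n) ≤ apow h (h y x) n := by
  induction n with
  | zero => exact hxy
  | succ n ih =>
      calc h (apow h x (n + 1)) (apow h y (n + 1))
          = h x (h (h (apow h x n) y) (apow h y n)) := by
            rw [show apow h x (n + 1) = h x (apow h x n) from rfl,
              show apow h y (n + 1) = h y (apow h y n) from rfl,
              G.assoc x, ← G.assoc (apow h x n)]
        _ ≤ h x (h (h y (apow h x n)) (apow h y n)) :=
            (G.mono2 _).monotone ((G.mono1 _).monotone (word_x_y G hxy n))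
        _ = h (h x y) (h (apow h x n) (apow h y n)) := by
            rw [G.assoc y, ← G.assoc x, ← G.assoc (h x y)]
        _ ≤ h (h y x) (h (apow h x n) (apow h y n)) := (G.mono1 _).monotone hxy
        _ ≤ h (h y x) (apow h (h y x) n) := (G.mono2 _).monotone ih
        _ = apow h (h y x) (n + 1) := rfl

end Words

section NuAdd

variable (G : ASemi h) (pos : ∀ x z : α, z < h x z ∧ z < h z x)
include G pos

lemma nu_add_lower (c x y : α) (j : ℕ) :
    nu h c x j + nu h c y j ≤ nu h c (h x y) j := by
  rcases Nat.eq_zero_or_pos (nu h c x j) with h0 | hpx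
  · rw [h0, zero_add]
    exact nu_mono_elem G pos (le_of_lt (pos x y).1) j
  rcases Nat.eq_zero_or_pos (nu h c y j) with h0 | hpy
  · rw [h0, add_zero]
    exact nu_mono_elem G pos (le_of_lt (pos y x).2) j
  have s1 := nu_spec G pos (c := c) (x := x) (j := j) hpx
  have s2 := nu_spec G pos (c := c) (x := y) (j := j) hpy
  have hmid : h (apow h x (2 ^ j - 1)) (apow h y (2 ^ j - 1)) ≤ apow h (h x y) (2 ^ j - 1)
      ∨ h (apow h y (2 ^ j - 1)) (apow h x (2 ^ j - 1)) ≤ apow h (h x y) (2 ^ j - 1) := by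
    rcases le_total (h x y) (h y x) with hc1 | hc2
    · exact Or.inl (word_lower G hc1 _)
    · exact Or.inr (word_lower' G (x := y) (y := x) hc2 _)
  have key : apow h c ((nu h c x j - 1) + (nu h c y j - 1) + 1) ≤ apow h (h x y) (2 ^ j - 1) := by
    rw [apow_add G]
    rcases hmid with hm | hm
    · exact le_trans (h_le_h G s1 s2) hm
    · calc h (apow h c (nu h c x j - 1)) (apow h c (nu h c y j - 1))
          = apow h c ((nu h c x j - 1) + (nu h c y j - 1) + 1) := (apow_add G _ _ _).symm
        _ = apow h c ((nu h c y j - 1) + (nu h c x j - 1) + 1) := by ring_nf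
        _ = h (apow h c (nu h c y j - 1)) (apow h c (nu h c x j - 1)) := apow_add G _ _ _
        _ ≤ h (apow h y (2 ^ j - 1)) (apow h x (2 ^ j - 1)) := h_le_h G s2 s1
        _ ≤ apow h (h x y) (2 ^ j - 1) := hm
  have := nu_le G pos key
  omega

lemma nu_add_upper (c x y : α) (j : ℕ) :
    nu h c (h x y) j ≤ nu h c x j + nu h c y j + 1 := by
  have l1 := nu_lt G pos c x j
  have l2 := nu_lt G pos c y j
  have hmid : apow h (h x y) (2 ^ j - 1) < apow h c (nu h c x j + nu h c y j + 1) := by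
    rcases le_total (h x y) (h y x) with hc1 | hc2
    · calc apow h (h x y) (2 ^ j - 1)
          ≤ h (apow h y (2 ^ j - 1)) (apow h x (2 ^ j - 1)) := word_upper G hc1 _
        _ < h (apow h c (nu h c y j)) (apow h c (nu h c x j)) := h_lt_h G l2 l1
        _ = apow h c (nu h c y j + nu h c x j + 1) := (apow_add G _ _ _).symm
        _ = apow h c (nu h c x j + nu h c y j + 1) := by ring_nf
    · calc apow h (h x y) (2 ^ j - 1)
          ≤ h (apow h x (2 ^ j - 1)) (apow h y (2 ^ j - 1)) :=
            word_upper' G (x := y) (y := x) hc2 _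
        _ < h (apow h c (nu h c x j)) (apow h c (nu h c y j)) := h_lt_h G l1 l2
        _ = apow h c (nu h c x j + nu h c y j + 1) := (apow_add G _ _ _).symm
  rcases Nat.eq_zero_or_pos (nu h c (h x y) j) with h0 | hp
  · omega
  · have s := nu_spec G pos (c := c) (x := h x y) (j := j) hp
    have := (apow_strictMono_exp G pos c).lt_iff_lt.mp (lt_of_le_of_lt s hmid)
    omega

end NuAdd

section Phi

variable (h) in
/-- the additive representation, normalized by `c` -/
noncomputable def phi (c x : α) : ℝ := ⨆ j : ℕ, (nu h c x j : ℝ) / 2 ^ j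

variable (G : ASemi h) (pos : ∀ x z : α, z < h x z ∧ z < h z x)
include G pos

lemma aseq_mono (c x : α) : Monotone (fun j : ℕ => (nu h c x j : ℝ) / 2 ^ j) := by
  apply monotone_nat_of_le_succ
  intro j
  have hd := nu_double G pos c x j
  rw [div_le_div_iff₀ (by positivity) (by positivity)]
  have h2 : (2 : ℝ) ^ (j + 1) = 2 ^ j * 2 := by rw [pow_succ]
  rw [h2]
  have : (2 : ℝ) * (nu h c x j : ℝ) ≤ (nu h c x (j + 1) : ℝ) := by
    exact_mod_cast (by omega : 2 * nu h c x j ≤ nu h c x (j + 1))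
  nlinarith [pow_pos (by norm_num : (0:ℝ) < 2) j]

lemma aseq_bddAbove (c x : α) :
    BddAbove (Set.range fun j : ℕ => (nu h c x j : ℝ) / 2 ^ j) := by
  obtain ⟨K, hK⟩ := arch G pos c x
  refine ⟨(K : ℝ) + 1, ?_⟩
  rintro _ ⟨j, rfl⟩
  have := nu_j_upper G pos (le_of_lt hK) j
  rw [div_le_iff₀ (by positivity)]
  calc (nu h c x j : ℝ) ≤ ((K + 1) * 2 ^ j : ℕ) := by exact_mod_cast this
    _ = ((K : ℝ) + 1) * 2 ^ j := by push_cast; ring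

lemma aseq_le_phi (c x : α) (j : ℕ) : (nu h c x j : ℝ) / 2 ^ j ≤ phi h c x :=
  le_ciSup (aseq_bddAbove G pos c x) j

lemma phi_le_aseq (c x : α) (j : ℕ) : phi h c x ≤ ((nu h c x j : ℝ) + 1) / 2 ^ j := by
  apply ciSup_le
  intro i
  rcases le_total i j with hij | hij
  · refine le_trans (aseq_mono G pos c x hij) ?_
    show (nu h c x j : ℝ) / 2 ^ j ≤ ((nu h c x j : ℝ) + 1) / 2 ^ j
    gcongr
    linarith
  · have hb := nu_i_of_j G pos (c := c) (x := x) hij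
    rw [div_le_div_iff₀ (by positivity) (by positivity)]
    have e : (2 : ℝ) ^ i = 2 ^ j * 2 ^ (i - j) := by
      rw [← pow_add]; congr 1; omega
    calc (nu h c x i : ℝ) * 2 ^ j ≤ ((nu h c x j + 1) * 2 ^ (i - j) : ℕ) * 2 ^ j := by
          have : (nu h c x i : ℝ) ≤ ((nu h c x j + 1) * 2 ^ (i - j) : ℕ) := by exact_mod_cast hb
          exact mul_le_mul_of_nonneg_right this (by positivity)
      _ = ((nu h c x j : ℝ) + 1) * 2 ^ i := by push_cast; rw [e]; ring

lemma phi_tendsto (c x : α) :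
    Tendsto (fun j : ℕ => (nu h c x j : ℝ) / 2 ^ j) atTop (𝓝 (phi h c x)) :=
  tendsto_atTop_ciSup (aseq_mono G pos c x) (aseq_bddAbove G pos c x)

lemma phi_mono (c : α) : Monotone (phi h c) := by
  intro x y hxy
  apply ciSup_le
  intro j
  refine le_trans ?_ (aseq_le_phi G pos c y j)
  show (nu h c x j : ℝ) / 2 ^ j ≤ (nu h c y j : ℝ) / 2 ^ j
  gcongr
  exact_mod_cast nu_mono_elem G pos (c := c) hxy j

lemma phi_pos (c x : α) : 0 < phi h c x := by
  obtain ⟨n, hn⟩ := arch G pos x c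
  set j := n + 1
  have hle : n ≤ 2 ^ j - 1 := by
    have := Nat.lt_two_pow_self (n := n)
    have h2 : 2 ^ n ≤ 2 ^ j := Nat.pow_le_pow_right (by norm_num) (by omega)
    omega
  have hc : apow h c 0 ≤ apow h x (2 ^ j - 1) :=
    le_of_lt (lt_of_lt_of_le hn ((apow_strictMono_exp G pos x).monotone hle))
  have h1 : 1 ≤ nu h c x j := nu_le G pos hc
  have : (1 : ℝ) / 2 ^ j ≤ phi h c x := by
    refine le_trans ?_ (aseq_le_phi G pos c x j)
    gcongr
    exact_mod_cast h1
  refine lt_of_lt_of_le (by positivity) this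

lemma phi_hom (c x y : α) : phi h c (h x y) = phi h c x + phi h c y := by
  have t1 : Tendsto (fun j : ℕ => (nu h c x j : ℝ) / 2 ^ j + (nu h c y j : ℝ) / 2 ^ j)
      atTop (𝓝 (phi h c x + phi h c y)) :=
    (phi_tendsto G pos c x).add (phi_tendsto G pos c y)
  have t2 : Tendsto (fun j : ℕ => (nu h c x j : ℝ) / 2 ^ j + (nu h c y j : ℝ) / 2 ^ j + 1 / 2 ^ j)
      atTop (𝓝 (phi h c x + phi h c y)) := by
    have : Tendsto (fun j : ℕ => (1 : ℝ) / 2 ^ j) atTop (𝓝 0) := by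
      simpa [one_div, Function.comp_def] using tendsto_inv_atTop_zero.comp
        (tendsto_pow_atTop_atTop_of_one_lt (by norm_num : (1:ℝ) < 2))
    simpa using t1.add this
  have hsq : Tendsto (fun j : ℕ => (nu h c (h x y) j : ℝ) / 2 ^ j) atTop
      (𝓝 (phi h c x + phi h c y)) := by
    refine tendsto_of_tendsto_of_tendsto_of_le_of_le t1 t2 ?_ ?_
    · intro j
      show (nu h c x j : ℝ) / 2 ^ j + (nu h c y j : ℝ) / 2 ^ j ≤ (nu h c (h x y) j : ℝ) / 2 ^ j
      rw [← add_div]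
      gcongr
      exact_mod_cast nu_add_lower G pos c x y j
    · intro j
      show (nu h c (h x y) j : ℝ) / 2 ^ j
          ≤ (nu h c x j : ℝ) / 2 ^ j + (nu h c y j : ℝ) / 2 ^ j + 1 / 2 ^ j
      rw [← add_div, ← add_div]
      gcongr
      exact_mod_cast nu_add_upper G pos c x y j
  exact tendsto_nhds_unique (phi_tendsto G pos c (h x y)) hsq

lemma phi_strictMono [PreconnectedSpace α] (c : α) : StrictMono (phi h c) := by
  have hmono := phi_mono G pos c
  intro x y hxy
  rcases lt_or_eq_of_le (hmono hxy.le) with hlt | heq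
  · exact hlt
  exfalso
  have step : ∀ z z' : α, z ≤ z' → h z' x ≤ h z y → phi h c z' = phi h c z := by
    intro z z' hzz hhh
    have h1 : phi h c z' + phi h c x ≤ phi h c z + phi h c y := by
      rw [← phi_hom G pos, ← phi_hom G pos]; exact hmono hhh
    have h2 : phi h c z' ≤ phi h c z := by linarith [heq]
    exact le_antisymm h2 (hmono hzz)
  have hlc : IsLocallyConstant (phi h c) := by
    rw [IsLocallyConstant.iff_eventually_eq]
    intro z
    have hU : {w | h w x < h z y} ∈ 𝓝 z :=
      (isOpen_lt (G.cont1 x) continuous_const).mem_nhds (G.mono2 z hxy)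
    have hV : {w | h z x < h w y} ∈ 𝓝 z :=
      (isOpen_lt continuous_const (G.cont1 y)).mem_nhds (G.mono2 z hxy)
    filter_upwards [hU, hV] with w hw1 hw2
    rcases le_total z w with hzw | hwz
    · exact step z w hzw (le_of_lt hw1)
    · exact (step w z hwz (le_of_lt hw2)).symm
  have hconst := hlc.apply_eq_of_preconnectedSpace (h x x) x
  have hh := phi_hom G pos c x x
  have hp := phi_pos G pos c x
  linarith

lemma exists_chain {q1 q2 : α} (hq : q1 < q2) :
    ∃ t : ℕ → α, StrictMono t ∧ ∀ n, q1 < t n ∧ t n < q2 := by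
  obtain ⟨p0, hp01, hp02⟩ := exists_between hq
  have hstep : ∀ p : {p : α // q1 < p ∧ p < q2},
      ∃ p' : {p : α // q1 < p ∧ p < q2}, (p : α) < (p' : α) := by
    rintro ⟨p, hp1, hp2⟩
    obtain ⟨u, hu1, hu2⟩ := exists_between hp2
    exact ⟨⟨u, lt_trans hp1 hu1, hu2⟩, hu1⟩
  choose f hf using hstep
  refine ⟨fun n => ((f^[n] ⟨p0, hp01, hp02⟩ : {p : α // q1 < p ∧ p < q2}) : α),
    strictMono_nat_of_lt_succ fun n => ?_, fun n => (f^[n] ⟨p0, hp01, hp02⟩).2⟩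
  rw [Function.iterate_succ_apply']
  exact hf _

lemma no_left_jump [PreconnectedSpace α] {c z w1 : α} (hw1 : w1 < z) {δ : ℝ} (hδ : 0 < δ)
    (hjump : ∀ w, w < z → phi h c w ≤ phi h c z - δ) : False := by
  have hmono := phi_mono G pos c
  have hC : ∀ q s, s < h z q → phi h c s ≤ phi h c z + phi h c q - δ := by
    intro q s hs
    have hnb : {w | s < h w q} ∈ 𝓝 z :=
      (isOpen_lt continuous_const (G.cont1 q)).mem_nhds hs
    obtain ⟨l, hl, hsub⟩ := exists_Ioc_subset_of_mem_nhds hnb ⟨w1, hw1⟩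
    obtain ⟨w, hwm, hwz⟩ := exists_between (max_lt hl hw1)
    have hw : s < h w q := hsub ⟨lt_of_le_of_lt (le_max_left _ _) hwm, le_of_lt hwz⟩
    calc phi h c s ≤ phi h c (h w q) := hmono (le_of_lt hw)
      _ = phi h c w + phi h c q := phi_hom G pos c w q
      _ ≤ (phi h c z - δ) + phi h c q := by linarith [hjump w hwz]
      _ = phi h c z + phi h c q - δ := by ring
  obtain ⟨t, ht, htb⟩ := exists_chain G pos hw1
  have key : ∀ n, phi h c (t n) + δ ≤ phi h c (t (n + 1)) := by
    intro n
    have h1 : h z (t n) < h z (t (n + 1)) := G.mono2 z (ht (Nat.lt_succ_self n))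
    have h2 := hC (t (n + 1)) (h z (t n)) h1
    rw [phi_hom G pos] at h2
    linarith
  have grow : ∀ n : ℕ, phi h c (t 0) + n * δ ≤ phi h c (t n) := by
    intro n
    induction n with
    | zero => simp
    | succ n ih =>
        have := key n
        push_cast
        push_cast at ih
        linarith
  obtain ⟨n, hn⟩ := exists_nat_gt ((phi h c z - phi h c (t 0)) / δ)
  have hb : phi h c (t n) ≤ phi h c z := hmono (le_of_lt (htb n).2)
  have := grow n
  rw [div_lt_iff₀ hδ] at hn
  linarith

lemma no_right_jump [PreconnectedSpace α] {c z w1 : α} (hw1 : z < w1) {δ : ℝ} (hδ : 0 < δ)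
    (hjump : ∀ w, z < w → phi h c z + δ ≤ phi h c w) : False := by
  have hmono := phi_mono G pos c
  have hC : ∀ q s, h z q < s → phi h c z + phi h c q + δ ≤ phi h c s := by
    intro q s hs
    have hnb : {w | h w q < s} ∈ 𝓝 z :=
      (isOpen_lt (G.cont1 q) continuous_const).mem_nhds hs
    obtain ⟨u, hu, hsub⟩ := exists_Ico_subset_of_mem_nhds hnb ⟨w1, hw1⟩
    obtain ⟨w, hwz, hwu⟩ := exists_between (lt_min hu hw1)
    have hw : h w q < s := hsub ⟨le_of_lt hwz, lt_of_lt_of_le hwu (min_le_left _ _)⟩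
    calc phi h c z + phi h c q + δ = (phi h c z + δ) + phi h c q := by ring
      _ ≤ phi h c w + phi h c q := by linarith [hjump w hwz]
      _ = phi h c (h w q) := (phi_hom G pos c w q).symm
      _ ≤ phi h c s := hmono (le_of_lt hw)
  obtain ⟨t, ht, htb⟩ := exists_chain G pos hw1
  have key : ∀ n, phi h c (t n) + δ ≤ phi h c (t (n + 1)) := by
    intro n
    have h1 : h z (t n) < h z (t (n + 1)) := G.mono2 z (ht (Nat.lt_succ_self n))
    have h2 := hC (t n) (h z (t (n + 1))) h1
    rw [phi_hom G pos] at h2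
    linarith
  have grow : ∀ n : ℕ, phi h c (t 0) + n * δ ≤ phi h c (t n) := by
    intro n
    induction n with
    | zero => simp
    | succ n ih =>
        have := key n
        push_cast
        push_cast at ih
        linarith
  obtain ⟨n, hn⟩ := exists_nat_gt ((phi h c w1 - phi h c (t 0)) / δ)
  have hb : phi h c (t n) ≤ phi h c w1 := hmono (le_of_lt (htb n).2)
  have := grow n
  rw [div_lt_iff₀ hδ] at hn
  linarith

lemma phi_continuous [PreconnectedSpace α] (c : α) : Continuous (phi h c) := by
  have hmono := phi_mono G pos c
  rw [continuous_iff_continuousAt]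
  intro z
  rw [ContinuousAt, tendsto_order]
  constructor
  · intro b hb
    by_cases hmin : ∃ w, w < z
    · obtain ⟨w1, hw1⟩ := hmin
      by_cases hex : ∃ w, w < z ∧ b < phi h c w
      · obtain ⟨w0, hw0, hbw⟩ := hex
        filter_upwards [(isOpen_Ioi (a := w0)).mem_nhds hw0] with w hw
        exact lt_of_lt_of_le hbw (hmono (le_of_lt hw))
      · exfalso
        push_neg at hex
        refine no_left_jump G pos (c := c) hw1 (sub_pos.mpr hb) fun w hw => ?_
        have := hex w hw
        linarith
    · push_neg at hmin
      filter_upwards [univ_mem] with w _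
      exact lt_of_lt_of_le hb (hmono (hmin w))
  · intro b hb
    by_cases hmax : ∃ w, z < w
    · obtain ⟨w1, hw1⟩ := hmax
      by_cases hex : ∃ w, z < w ∧ phi h c w < b
      · obtain ⟨w0, hw0, hbw⟩ := hex
        filter_upwards [(isOpen_Iio (a := w0)).mem_nhds hw0] with w hw
        exact lt_of_le_of_lt (hmono (le_of_lt hw)) hbw
      · exfalso
        push_neg at hex
        refine no_right_jump G pos (c := c) hw1 (sub_pos.mpr hb) fun w hw => ?_
        have := hex w hw
        linarith
    · push_neg at hmax
      filter_upwards [univ_mem] with w _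
      exact lt_of_le_of_lt (hmono (hmax w)) hb

/-- The positive case of the representation theorem. -/
theorem exists_rep_of_pos [PreconnectedSpace α] :
    ∃ φ : α → ℝ, StrictMono φ ∧ Continuous φ ∧
      (∀ x y, φ (h x y) = φ x + φ y) ∧ (∀ x, 0 < φ x) := by
  cases isEmpty_or_nonempty α with
  | inl hemp =>
      exact ⟨fun _ => 1, fun a => isEmptyElim a, continuous_const,
        fun a => isEmptyElim a, fun a => isEmptyElim a⟩
  | inr hne =>
      let c := Classical.arbitrary α
      exact ⟨phi h c, phi_strictMono G pos c, phi_continuous G pos c,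
        phi_hom G pos c, phi_pos G pos c⟩

end Phi

section Structure

lemma clopen_dichotomy {γ : Type*} [TopologicalSpace γ] [PreconnectedSpace γ]
    {A B : Set γ} (hA : IsOpen A) (hB : IsOpen B)
    (hdisj : ∀ z, ¬(z ∈ A ∧ z ∈ B)) (hcover : ∀ z, z ∈ A ∨ z ∈ B) {x : γ} (hx : x ∈ A) :
    ∀ z, z ∈ A := by
  have hcompl : Aᶜ = B := by
    ext z
    constructor
    · intro hz; exact (hcover z).resolve_left hz
    · intro hz hz'; exact hdisj z ⟨hz', hz⟩
  have hclosed : IsClosed A := by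
    rw [← hcompl] at hB
    exact isOpen_compl_iff.mp hB
  have hclopen : IsClopen A := ⟨hclosed, hA⟩
  rcases isClopen_iff.mp hclopen with hemp | huniv
  · exact absurd (hemp ▸ hx) (Set.notMem_empty x)
  · intro z; rw [huniv]; trivial

variable (G : ASemi h)
include G

lemma no_fixed_left {x z : α} (hx : x < h x x) : h x z ≠ z := by
  intro hz
  have e1 : h (h x x) z = h x (h x z) := G.assoc _ _ _
  rw [hz, hz] at e1
  have h2 : h x z < h (h x x) z := G.mono1 z hx
  rw [hz, e1] at h2
  exact lt_irrefl z h2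

lemma no_fixed_right {x z : α} (hx : x < h x x) : h z x ≠ z := by
  intro hz
  have e1 : h z (h x x) = h (h z x) x := (G.assoc _ _ _).symm
  rw [hz] at e1
  have h2 : h z x < h z (h x x) := G.mono2 z hx
  rw [hz, e1, hz] at h2
  exact lt_irrefl z h2

lemma pos_of_sq [PreconnectedSpace α] {x : α} (hx : x < h x x) :
    ∀ z, z < h x z ∧ z < h z x := by
  have hleft : ∀ z, z < h x z := by
    refine clopen_dichotomy (A := {z | z < h x z}) (B := {z | h x z < z})
      (isOpen_lt continuous_id (G.cont2 x)) (isOpen_lt (G.cont2 x) continuous_id)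
      (fun z hz => lt_asymm hz.1 hz.2) (fun z => ?_) (x := x) hx
    rcases lt_trichotomy z (h x z) with hlt | heq | hgt
    · exact Or.inl hlt
    · exact absurd heq.symm (no_fixed_left G hx)
    · exact Or.inr hgt
  have hright : ∀ z, z < h z x := by
    refine clopen_dichotomy (A := {z | z < h z x}) (B := {z | h z x < z})
      (isOpen_lt continuous_id (G.cont1 x)) (isOpen_lt (G.cont1 x) continuous_id)
      (fun z hz => lt_asymm hz.1 hz.2) (fun z => ?_) (x := x) hx
    rcases lt_trichotomy z (h z x) with hlt | heq | hgt
    · exact Or.inl hlt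
    · exact absurd heq.symm (no_fixed_right G hx)
    · exact Or.inr hgt
  exact fun z => ⟨hleft z, hright z⟩

lemma idem_left {e : α} (he : h e e = e) (y : α) : h e y = y := by
  have : h e (h e y) = h e y := by rw [← G.assoc, he]
  exact (G.mono2 e).injective this

lemma idem_right {e : α} (he : h e e = e) (y : α) : h y e = y := by
  have : h (h y e) e = h y e := by rw [G.assoc, he]
  exact (G.mono1 e).injective this

lemma exists_big [PreconnectedSpace α] {e q : α} (he : h e e = e) (hq : e < q) (x u : α) :
    ∃ p, e < p ∧ u < h x p := by
  have hqq : q < h q q := by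
    have h1 : h e q < h q q := G.mono1 q hq
    rwa [idem_left G he q] at h1
  have hposq := pos_of_sq G hqq
  by_cases hex : ∃ p, u < h x p
  · obtain ⟨p, hp⟩ := hex
    exact ⟨max p q, lt_of_lt_of_le hq (le_max_right p q),
      lt_of_lt_of_le hp ((G.mono2 x).monotone (le_max_left p q))⟩
  · exfalso
    push_neg at hex
    set S := Set.range (h x) with hS
    have hne : S.Nonempty := ⟨h x q, q, rfl⟩
    have hbdd : BddAbove S := ⟨u, by rintro _ ⟨v, rfl⟩; exact hex v⟩
    set L := sSup S with hL
    have hLc : L ∈ closure S := csSup_mem_closure hne hbdd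
    have himg : (fun v => h v q) '' S ⊆ S := by
      rintro _ ⟨_, ⟨v, rfl⟩, rfl⟩
      exact ⟨h v q, (G.assoc x v q).symm⟩
    have h1 : h L q ∈ closure S := by
      refine closure_mono himg ?_
      exact image_closure_subset_closure_image (G.cont1 q) ⟨L, hLc, rfl⟩
    have h2 : closure S ⊆ Iic L :=
      closure_minimal (fun z hz => le_csSup hbdd hz) isClosed_Iic
    exact absurd (h2 h1) (not_le.mpr (hposq L).2)

end Structure

section Extension

variable [PreconnectedSpace α] (G : ASemi h)
include G

theorem exists_rep_with_idem {e q : α} (he : h e e = e) (heq : e < q) :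
    ∃ φ : α → ℝ, StrictMono φ ∧ Continuous φ ∧ (∀ x y, φ (h x y) = φ x + φ y) := by
  classical
  haveI : Inhabited ↥(Set.Ioi e) := ⟨⟨q, heq⟩⟩
  haveI hOC : Set.OrdConnected (Set.Ioi e) := Set.ordConnected_Ioi
  haveI : DenselyOrdered ↥(Set.Ioi e) := by
    constructor
    rintro ⟨a, ha⟩ ⟨b, hb⟩ hab
    rw [Subtype.mk_lt_mk] at hab
    obtain ⟨u, hu1, hu2⟩ := exists_between hab
    exact ⟨⟨u, lt_trans ha hu1⟩, Subtype.mk_lt_mk.mpr hu1, Subtype.mk_lt_mk.mpr hu2⟩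
  haveI : PreconnectedSpace ↥(Set.Ioi e) := Subtype.preconnectedSpace hOC.isPreconnected
  -- positivity of elements above e
  have hsq : ∀ x : α, e < x → x < h x x := fun x hx => by
    have h1 : h e x < h x x := G.mono1 x hx
    rwa [idem_left G he x] at h1
  have hposgt : ∀ x : α, e < x → ∀ z, z < h x z ∧ z < h z x :=
    fun x hx => pos_of_sq G (hsq x hx)
  have hcl : ∀ (a b : ↥(Set.Ioi e)), h (a : α) (b : α) ∈ Set.Ioi e :=
    fun a b => lt_trans b.2 ((hposgt _ a.2) (b : α)).1
  set Y := ↥(Set.Ioi e)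
  set hY : Y → Y → Y := fun a b => ⟨h (a : α) (b : α), hcl a b⟩ with hYdef
  have GY : ASemi hY := by
    constructor
    · intro a b c; exact Subtype.ext (G.assoc _ _ _)
    · intro b
      exact Continuous.subtype_mk ((G.cont1 (b : α)).comp continuous_subtype_val) _
    · intro a
      exact Continuous.subtype_mk ((G.cont2 (a : α)).comp continuous_subtype_val) _
    · exact Continuous.subtype_mk (G.contJ.comp
        ((continuous_subtype_val.comp continuous_fst).prodMk
          (continuous_subtype_val.comp continuous_snd))) _
    · intro b a a' haa
      exact Subtype.mk_lt_mk.mpr (G.mono1 (b : α) (Subtype.coe_lt_coe.mpr haa))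
    · intro a b b' hbb
      exact Subtype.mk_lt_mk.mpr (G.mono2 (a : α) (Subtype.coe_lt_coe.mpr hbb))
  have posY : ∀ a z : Y, z < hY a z ∧ z < hY z a := by
    intro a z
    constructor
    · exact Subtype.mk_lt_mk.mpr ((hposgt _ a.2) (z : α)).1
    · exact Subtype.mk_lt_mk.mpr ((hposgt _ a.2) (z : α)).2
  obtain ⟨ψ, hψm, hψc, hψh, hψp⟩ := exists_rep_of_pos GY posY
  have hcomm : ∀ a b : Y, h (a : α) (b : α) = h (b : α) (a : α) := by
    intro a b
    have : ψ (hY a b) = ψ (hY b a) := by rw [hψh, hψh]; ring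
    have := hψm.injective this
    exact congrArg Subtype.val this
  choose p hp1 hp2 using fun x : α => exists_big G he heq x e
  -- hp1 : ∀ x, e < p x ; hp2 : ∀ x, e < h x (p x)
  set Φ : α → ℝ := fun x => ψ ⟨h x (p x), hp2 x⟩ - ψ ⟨p x, hp1 x⟩ with hΦdef
  have wd : ∀ (x : α) (p₁ p₂ : Y) (hx1 : e < h x (p₁ : α)) (hx2 : e < h x (p₂ : α)),
      ψ ⟨h x (p₁ : α), hx1⟩ - ψ p₁ = ψ ⟨h x (p₂ : α), hx2⟩ - ψ p₂ := by
    intro x p₁ p₂ hx1 hx2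
    have e1 : ψ (hY ⟨h x (p₁ : α), hx1⟩ p₂) = ψ ⟨h x (p₁ : α), hx1⟩ + ψ p₂ := hψh _ _
    have e2 : ψ (hY ⟨h x (p₂ : α), hx2⟩ p₁) = ψ ⟨h x (p₂ : α), hx2⟩ + ψ p₁ := hψh _ _
    have e3 : hY ⟨h x (p₁ : α), hx1⟩ p₂ = hY ⟨h x (p₂ : α), hx2⟩ p₁ := by
      apply Subtype.ext
      show h (h x (p₁ : α)) (p₂ : α) = h (h x (p₂ : α)) (p₁ : α)
      rw [G.assoc, G.assoc, hcomm p₁ p₂]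
    rw [e3] at e1
    linarith
  have hΦval : ∀ (x : α) (r : Y) (hxr : e < h x (r : α)),
      Φ x = ψ ⟨h x (r : α), hxr⟩ - ψ r := by
    intro x r hxr
    exact (wd x ⟨p x, hp1 x⟩ r (hp2 x) hxr)
  refine ⟨Φ, ?_, ?_, ?_⟩
  · intro x y hxy
    have hy2 : e < h y (p x) := lt_trans (hp2 x) (G.mono1 (p x) hxy)
    rw [hΦval x ⟨p x, hp1 x⟩ (hp2 x), hΦval y ⟨p x, hp1 x⟩ hy2]
    have : ψ ⟨h x (p x), hp2 x⟩ < ψ ⟨h y (p x), hy2⟩ :=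
      hψm (Subtype.mk_lt_mk.mpr (G.mono1 (p x) hxy))
    linarith
  · rw [continuous_iff_continuousAt]
    intro z
    set U : Set α := {w | e < h w (p z)} with hU
    have hUopen : IsOpen U := isOpen_lt continuous_const (G.cont1 (p z))
    have hUz : z ∈ U := hp2 z
    set φ' : α → ℝ := fun v => if hv : e < v then ψ ⟨v, hv⟩ else 0 with hφ'def
    have hφ'cont : ContinuousOn φ' (Set.Ioi e) := by
      rw [continuousOn_iff_continuous_restrict]
      have : Set.domRestrict (Set.Ioi e) φ' = ψ := funext fun v => dif_pos v.2
      rw [this]; exact hψc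
    have hc2 : ContinuousOn (fun w => φ' (h w (p z)) - ψ ⟨p z, hp1 z⟩) U := by
      refine ContinuousOn.sub ?_ continuousOn_const
      exact hφ'cont.comp (G.cont1 (p z)).continuousOn (fun w hw => hw)
    have hΦeq : Set.EqOn Φ (fun w => φ' (h w (p z)) - ψ ⟨p z, hp1 z⟩) U := by
      intro w hw
      show Φ w = φ' (h w (p z)) - ψ ⟨p z, hp1 z⟩
      have hd : φ' (h w (p z)) = ψ ⟨h w (p z), hw⟩ := dif_pos hw
      rw [hd]
      exact hΦval w ⟨p z, hp1 z⟩ hw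
    exact ((hc2.congr hΦeq).continuousAt (hUopen.mem_nhds hUz))
  · intro x y
    obtain ⟨r, hr1, hr2⟩ := exists_big G he heq (h x (h y (p y))) e
    -- hr2 : e < h (h x (h y (p y))) r
    set py := p y with hpydef
    have hpy1 : e < py := hp1 y
    have hpy2 : e < h y py := hp2 y
    -- elements
    have eA : h (h x y) (h py r) = h (h x (h y py)) r := by
      rw [G.assoc x y, ← G.assoc y py r, ← G.assoc x (h y py) r]
    have eB : h x (h (h y py) r) = h (h x (h y py)) r := (G.assoc _ _ _).symm
    have hP2 : e < h py r := lt_trans hr1 ((hposgt _ hpy1) r).1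
    have hW2 : e < h (h y py) r := lt_trans hr1 ((hposgt _ hpy2) r).1
    have hxy2 : e < h (h x y) (h py r) := by rw [eA]; exact hr2
    have hx2 : e < h x (h (h y py) r) := by rw [eB]; exact hr2
    rw [hΦval (h x y) ⟨h py r, hP2⟩ hxy2, hΦval x ⟨h (h y py) r, hW2⟩ hx2,
      hΦval y ⟨py, hpy1⟩ hpy2]
    have v1 : ψ ⟨h (h x y) (h py r), hxy2⟩ = ψ ⟨h x (h (h y py) r), hx2⟩ :=
      congrArg ψ (Subtype.ext (eA.trans eB.symm))
    have v2 : ψ (⟨h py r, hP2⟩ : Y) = ψ ⟨py, hpy1⟩ + ψ ⟨r, hr1⟩ := by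
      have : (⟨h py r, hP2⟩ : Y) = hY ⟨py, hpy1⟩ ⟨r, hr1⟩ := Subtype.ext rfl
      rw [this, hψh]
    have v3 : ψ (⟨h (h y py) r, hW2⟩ : Y) = ψ ⟨h y py, hpy2⟩ + ψ ⟨r, hr1⟩ := by
      have : (⟨h (h y py) r, hW2⟩ : Y) = hY ⟨h y py, hpy2⟩ ⟨r, hr1⟩ := Subtype.ext rfl
      rw [this, hψh]
    rw [v1, v2, v3]
    ring

end Extension

section Main

variable [PreconnectedSpace α] [Nontrivial α] (G : ASemi h)
include G

theorem exists_rep_main' (hP : ∃ p : α, p < h p p) :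
    ∃ φ : α → ℝ, StrictMono φ ∧ Continuous φ ∧ (∀ x y, φ (h x y) = φ x + φ y) := by
  obtain ⟨p, hp⟩ := hP
  by_cases hE : ∃ e, h e e = e
  · obtain ⟨e, he⟩ := hE
    have hpe : e < p := by
      rcases lt_trichotomy p e with hlt | heqq | hgt
      · exfalso
        have h1 : h p p < h p e := G.mono2 p hlt
        rw [idem_right G he p] at h1
        exact lt_asymm hp h1
      · exfalso
        rw [heqq] at hp
        rw [he] at hp
        exact lt_irrefl e hp
      · exact hgt
    exact exists_rep_with_idem G he hpe
  · push_neg at hE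
    have hall : ∀ x, x < h x x := by
      have hdiag : Continuous fun x : α => h x x :=
        G.contJ.comp (continuous_id.prodMk continuous_id)
      refine clopen_dichotomy (A := {x | x < h x x}) (B := {x | h x x < x})
        (isOpen_lt continuous_id hdiag) (isOpen_lt hdiag continuous_id)
        (fun z hz => lt_asymm hz.1 hz.2) (fun z => ?_) (x := p) hp
      rcases lt_trichotomy z (h z z) with hlt | heqz | hgt
      · exact Or.inl hlt
      · exact absurd heqz.symm (hE z)
      · exact Or.inr hgt
    have pos : ∀ x z : α, z < h x z ∧ z < h z x := fun x z => pos_of_sq G (hall x) z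
    obtain ⟨φ, h1, h2, h3, _⟩ := exists_rep_of_pos G pos
    exact ⟨φ, h1, h2, h3⟩

theorem exists_rep :
    ∃ φ : α → ℝ, StrictMono φ ∧ Continuous φ ∧ (∀ x y, φ (h x y) = φ x + φ y) := by
  by_cases hP : ∃ p : α, p < h p p
  · exact exists_rep_main' G hP
  by_cases hN : ∃ n : α, h n n < n
  · obtain ⟨n, hn⟩ := hN
    haveI : PreconnectedSpace αᵒᵈ := inferInstanceAs (PreconnectedSpace α)
    haveI : Nontrivial αᵒᵈ := inferInstanceAs (Nontrivial α)
    set hd : αᵒᵈ → αᵒᵈ → αᵒᵈ := fun a b => OrderDual.toDual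
      (h (OrderDual.ofDual a) (OrderDual.ofDual b)) with hddef
    have Gd : ASemi hd := by
      constructor
      · intro a b c; exact G.assoc _ _ _
      · intro b; exact G.cont1 _
      · intro a; exact G.cont2 _
      · exact G.contJ
      · intro b a a' haa; exact G.mono1 _ haa
      · intro a b b' hbb; exact G.mono2 _ hbb
    have hPd : ∃ pd : αᵒᵈ, pd < hd pd pd := ⟨OrderDual.toDual n, hn⟩
    obtain ⟨φd, hm, hc, hh⟩ := exists_rep_main' Gd hPd
    refine ⟨fun x => -φd (OrderDual.toDual x), ?_, ?_, ?_⟩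
    · intro a b hab
      show -φd (OrderDual.toDual a) < -φd (OrderDual.toDual b)
      have h1 : φd (OrderDual.toDual b) < φd (OrderDual.toDual a) := hm hab
      linarith
    · exact ((hc.comp continuous_toDual).neg)
    · intro x y
      show -φd (OrderDual.toDual (h x y))
          = -φd (OrderDual.toDual x) + -φd (OrderDual.toDual y)
      rw [show OrderDual.toDual (h x y)
          = hd (OrderDual.toDual x) (OrderDual.toDual y) from rfl, hh]
      ring
  · push_neg at hP hN
    exfalso
    have hall : ∀ x, h x x = x := fun x =>
      le_antisymm (hP x) (hN x)
    obtain ⟨a, b, hab⟩ := exists_pair_ne α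
    have h1 : h a b = b := idem_left G (hall a) b
    have h2 : h a b = a := idem_right G (hall b) a
    exact hab (h2 ▸ h1)

end Main

end Acz

namespace Acz

section Helpers

/-- inverse packaging for a continuous strictly monotone map into `ℝ` -/
lemma inverse_pack {X : Type*} [ConditionallyCompleteLinearOrder X] [TopologicalSpace X]
    [OrderTopology X] [Nonempty X] [PreconnectedSpace X] {φ : X → ℝ}
    (hm : StrictMono φ) (hc : Continuous φ) :
    ∃ ρ : ℝ → X, (∀ x, ρ (φ x) = x) ∧ (∀ t ∈ Set.range φ, φ (ρ t) = t) ∧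
      ContinuousOn ρ (Set.range φ) ∧ StrictMonoOn ρ (Set.range φ) := by
  classical
  set ρ : ℝ → X := fun t => if ht : ∃ x, φ x = t then Classical.choose ht else
    Classical.arbitrary X with hρdef
  have hρ2 : ∀ t ∈ Set.range φ, φ (ρ t) = t := by
    rintro t ⟨x, rfl⟩
    have hex : ∃ y, φ y = φ x := ⟨x, rfl⟩
    simp only [hρdef, dif_pos hex]
    exact Classical.choose_spec hex
  have hρ1 : ∀ x, ρ (φ x) = x := fun x => hm.injective (hρ2 _ ⟨x, rfl⟩)
  refine ⟨ρ, hρ1, hρ2, ?_, ?_⟩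
  · haveI : Set.OrdConnected (Set.range φ) := (isPreconnected_range hc).ordConnected
    haveI : OrderTopology ↥(Set.range φ) := orderTopology_of_ordConnected
    set e := StrictMono.orderIso φ hm with hedef
    rw [continuousOn_iff_continuous_restrict]
    have hre : Set.domRestrict (Set.range φ) ρ = fun t => e.symm t := by
      funext t
      apply hm.injective
      have h1 : φ (e.symm t) = (t : ℝ) := congrArg Subtype.val (e.apply_symm_apply t)
      rw [h1]
      exact hρ2 _ t.2
    rw [hre]
    exact (OrderIso.continuous e.symm)
  · intro s hs t ht hst
    have : φ (ρ s) < φ (ρ t) := by rw [hρ2 s hs, hρ2 t ht]; exact hst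
    exact hm.lt_iff_lt.mp this

lemma unbdd_above {J : Set ℝ} (hadd : ∀ s ∈ J, ∀ t ∈ J, s + t ∈ J) {t : ℝ}
    (ht : t ∈ J) (htpos : 0 < t) : ¬BddAbove J := by
  have hmul : ∀ n : ℕ, ((n : ℝ) + 1) * t ∈ J := by
    intro n
    induction n with
    | zero => simpa using ht
    | succ n ih =>
        have := hadd _ ih _ ht
        have e : ((n : ℝ) + 1) * t + t = ((n + 1 : ℕ) + 1 : ℝ) * t := by push_cast; ring
        rwa [e] at this
  rintro ⟨b, hb⟩
  obtain ⟨n, hn⟩ := exists_nat_gt (b / t)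
  have h1 := hb (hmul n)
  rw [div_lt_iff₀ htpos] at hn
  nlinarith

lemma unbdd_below {J : Set ℝ} (hadd : ∀ s ∈ J, ∀ t ∈ J, s + t ∈ J) {t : ℝ}
    (ht : t ∈ J) (htneg : t < 0) : ¬BddBelow J := by
  have h1 : ¬BddAbove (-J : Set ℝ) := by
    refine unbdd_above (J := -J) ?_ (t := -t) (by simpa using ht) (by linarith)
    intro s hs u hu
    rw [Set.mem_neg] at hs hu ⊢
    have := hadd _ hs _ hu
    have e : -(s + u) = -s + -u := by ring
    rwa [e]
  intro hbdd
  exact h1 (BddBelow.neg hbdd)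

lemma classify_J {J : Set ℝ} (hJ : J.OrdConnected)
    (hnt : ∃ s ∈ J, ∃ t ∈ J, s ≠ t)
    (hadd : ∀ s ∈ J, ∀ t ∈ J, s + t ∈ J) :
    (∃ b : ℝ, b ≤ 0 ∧ J = Set.Iio b) ∨ (∃ b : ℝ, b ≤ 0 ∧ J = Set.Iic b) ∨
      (∃ a : ℝ, 0 ≤ a ∧ J = Set.Ioi a) ∨ (∃ a : ℝ, 0 ≤ a ∧ J = Set.Ici a) ∨
      J = Set.univ := by
  obtain ⟨s₀, hs₀, t₀, ht₀, hst₀⟩ := hnt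
  have hJne : J.Nonempty := ⟨s₀, hs₀⟩
  by_cases hP : ∃ t ∈ J, 0 < t
  · obtain ⟨tp, htp, htpp⟩ := hP
    have hnb : ¬BddAbove J := unbdd_above hadd htp htpp
    by_cases hN : ∃ t ∈ J, t < 0
    · obtain ⟨tn, htn, htnn⟩ := hN
      exact Or.inr (Or.inr (Or.inr (Or.inr
        (hJ.isPreconnected.eq_univ_of_unbounded (unbdd_below hadd htn htnn) hnb))))
    · push_neg at hN
      -- J ⊆ Ici 0
      have hsub : ∀ x ∈ J, (0:ℝ) ≤ x := hN
      have hbb : BddBelow J := ⟨0, fun x hx => hsub x hx⟩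
      set a := sInf J with hadef
      have ha0 : 0 ≤ a := le_csInf hJne hsub
      have hup : ∀ x, a ≤ x → (∃ y ∈ J, y < x) → (∃ y ∈ J, x ≤ y) → x ∈ J := by
        rintro x hax ⟨y, hy, hyx⟩ ⟨z, hz, hxz⟩
        exact hJ.out hy hz ⟨le_of_lt hyx, hxz⟩
      have hbig : ∀ x : ℝ, ∃ y ∈ J, x ≤ y := by
        intro x
        by_contra hcon
        push_neg at hcon
        exact hnb ⟨x, fun y hy => le_of_lt (hcon y hy)⟩
      by_cases haJ : a ∈ J
      · refine Or.inr (Or.inr (Or.inr (Or.inl ⟨a, ha0, ?_⟩)))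
        apply Set.eq_of_subset_of_subset
        · intro x hx; exact csInf_le hbb hx
        · intro x hx
          rcases eq_or_lt_of_le (Set.mem_Ici.mp hx : a ≤ x) with rfl | hax
          · exact haJ
          · obtain ⟨z, hz, hxz⟩ := hbig x
            exact hJ.out haJ hz ⟨le_of_lt hax, hxz⟩
      · refine Or.inr (Or.inr (Or.inl ⟨a, ha0, ?_⟩))
        apply Set.eq_of_subset_of_subset
        · intro x hx
          rcases eq_or_lt_of_le (csInf_le hbb hx) with heq | hlt
          · exact absurd (show a ∈ J by rw [hadef, heq]; exact hx) haJ
          · exact hlt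
        · intro x hx
          obtain ⟨y, hy, hyx⟩ := exists_lt_of_csInf_lt hJne hx
          obtain ⟨z, hz, hxz⟩ := hbig x
          exact hJ.out hy hz ⟨le_of_lt hyx, hxz⟩
  · push_neg at hP
    have hN : ∃ t ∈ J, t < 0 := by
      rcases lt_trichotomy s₀ 0 with hlt | heq | hgt
      · exact ⟨s₀, hs₀, hlt⟩
      · rcases lt_trichotomy t₀ 0 with hlt' | heq' | hgt'
        · exact ⟨t₀, ht₀, hlt'⟩
        · exact absurd (heq.trans heq'.symm) hst₀
        · exact absurd hgt' (not_lt.mpr (hP t₀ ht₀))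
      · exact absurd hgt (not_lt.mpr (hP s₀ hs₀))
    obtain ⟨tn, htn, htnn⟩ := hN
    have hnb : ¬BddBelow J := unbdd_below hadd htn htnn
    have hsub : ∀ x ∈ J, x ≤ (0:ℝ) := hP
    have hbb : BddAbove J := ⟨0, fun x hx => hsub x hx⟩
    set b := sSup J with hbdef
    have hb0 : b ≤ 0 := csSup_le hJne hsub
    have hsmall : ∀ x : ℝ, ∃ y ∈ J, y ≤ x := by
      intro x
      by_contra hcon
      push_neg at hcon
      exact hnb ⟨x, fun y hy => le_of_lt (hcon y hy)⟩
    by_cases hbJ : b ∈ J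
    · refine Or.inr (Or.inl ⟨b, hb0, ?_⟩)
      apply Set.eq_of_subset_of_subset
      · intro x hx; exact le_csSup hbb hx
      · intro x hx
        rcases eq_or_lt_of_le (show x ≤ b from hx) with rfl | hax
        · exact hbJ
        · obtain ⟨z, hz, hxz⟩ := hsmall x
          exact hJ.out hz hbJ ⟨hxz, le_of_lt hax⟩
    · refine Or.inl ⟨b, hb0, ?_⟩
      apply Set.eq_of_subset_of_subset
      · intro x hx
        rcases eq_or_lt_of_le (le_csSup hbb hx) with heq | hlt
        · exact absurd (show b ∈ J by rw [hbdef, ← heq]; exact hx) hbJ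
        · exact hlt
      · intro x hx
        obtain ⟨y, hy, hyx⟩ := exists_lt_of_lt_csSup hJne hx
        obtain ⟨z, hz, hxz⟩ := hsmall x
        exact hJ.out hz hy ⟨hxz, le_of_lt hyx⟩

end Helpers

end Acz

section ForwardGlue

open Acz

theorem forward_rep (I : Set ℝ) (hconn : I.OrdConnected) (hne : ∃ x ∈ I, ∃ y ∈ I, x ≠ y)
    (F : List ↥I → ℝ)
    (hPre : VPreassoc F) (hQRI : VUnQRI F)
    (hgc : Continuous fun a : ↥I => F [a]) (hgi : Function.Injective fun a : ↥I => F [a])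
    (hF2c : Continuous fun p : ↥I × ↥I => F [p.1, p.2])
    (hinj2 : ∀ a : ↥I, Function.Injective fun b : ↥I => F [a, b])
    (hinj1 : ∀ b : ↥I, Function.Injective fun a : ↥I => F [a, b]) :
    ∃ (J : Set ℝ) (φ : ↥I → ℝ) (ψ : ℝ → ℝ),
      ((∃ b : ℝ, b ≤ 0 ∧ J = Set.Iio b) ∨ (∃ b : ℝ, b ≤ 0 ∧ J = Set.Iic b) ∨
        (∃ a : ℝ, 0 ≤ a ∧ J = Set.Ioi a) ∨ (∃ a : ℝ, 0 ≤ a ∧ J = Set.Ici a) ∨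
        J = Set.univ) ∧
      Continuous φ ∧ StrictMono φ ∧ Set.range φ = J ∧
      ContinuousOn ψ J ∧ (StrictMonoOn ψ J ∨ StrictAntiOn ψ J) ∧
      (∀ l : List ↥I, l ≠ [] → F l = ψ (l.map φ).sum) ∧
      (∀ a : ↥I, ψ (φ a) = F [a]) := by
  classical
  haveI : Set.OrdConnected I := hconn
  obtain ⟨x₀, hx₀, y₀, hy₀, hxy₀⟩ := hne
  haveI : Nonempty ↥I := ⟨⟨x₀, hx₀⟩⟩
  haveI : Inhabited ↥I := ⟨⟨x₀, hx₀⟩⟩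
  haveI : Nontrivial ↥I :=
    ⟨⟨⟨x₀, hx₀⟩, ⟨y₀, hy₀⟩, fun hcon => hxy₀ (congrArg Subtype.val hcon)⟩⟩
  haveI : DenselyOrdered ↥I := by
    constructor
    rintro ⟨a, ha⟩ ⟨b, hb⟩ hab
    rw [Subtype.mk_lt_mk] at hab
    obtain ⟨u, h1, h2⟩ := exists_between hab
    exact ⟨⟨u, hconn.out ha hb ⟨le_of_lt h1, le_of_lt h2⟩⟩,
      Subtype.mk_lt_mk.mpr h1, Subtype.mk_lt_mk.mpr h2⟩
  haveI : PreconnectedSpace ↥I := Subtype.preconnectedSpace hconn.isPreconnected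
  have hmem : ∀ a b : ↥I, ∃ c, F [c] = F [a, b] := by
    intro a b
    have h1 : F [a, b] ∈ VRanFlat F := ⟨[a, b], by simp, rfl⟩
    rw [← hQRI] at h1
    exact h1
  choose hop hopspec using hmem
  have key1 : ∀ (a b : ↥I) (l : List ↥I), F (a :: b :: l) = F (hop a b :: l) := by
    intro a b l
    have := hPre [] [a, b] [hop a b] l (hopspec a b).symm
    simpa using this
  have key2 : ∀ a b c : ↥I, F [a, hop b c] = F [a, b, c] := by
    intro a b c
    have := hPre [a] [hop b c] [b, c] [] (hopspec b c)
    simpa using this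
  have hassoc : ∀ a b c : ↥I, hop (hop a b) c = hop a (hop b c) := by
    intro a b c
    apply hgi
    show F [hop (hop a b) c] = F [hop a (hop b c)]
    rw [hopspec, hopspec]
    calc F [hop a b, c] = F [a, b, c] := (key1 a b [c]).symm
      _ = F [a, hop b c] := (key2 a b c).symm
  have hopinj2 : ∀ a : ↥I, Function.Injective (hop a) := by
    intro a b b' hbb
    apply hinj2 a
    show F [a, b] = F [a, b']
    rw [← hopspec, ← hopspec, hbb]
  have hopinj1 : ∀ b : ↥I, Function.Injective fun a => hop a b := by
    intro b a a' haa
    apply hinj1 b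
    show F [a, b] = F [a', b]
    rw [← hopspec, ← hopspec]
    exact congrArg F (by rw [show hop a b = hop a' b from haa])
  have hgm := hgc.strictMono_of_inj hgi
  obtain ⟨g₁, hg₁m, hg₁c, hs₁⟩ :
      ∃ g₁ : ↥I → ℝ, StrictMono g₁ ∧ Continuous g₁ ∧
        Continuous fun p : ↥I × ↥I => g₁ (hop p.1 p.2) := by
    rcases hgm with hmono | hanti
    · refine ⟨fun a => F [a], hmono, hgc, ?_⟩
      show Continuous fun p : ↥I × ↥I => F [hop p.1 p.2]
      have he : (fun p : ↥I × ↥I => F [hop p.1 p.2]) = fun p : ↥I × ↥I => F [p.1, p.2] := by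
        funext p; exact hopspec p.1 p.2
      rw [he]; exact hF2c
    · refine ⟨fun a => -F [a], fun a b hab => by simpa using (hanti hab), hgc.neg, ?_⟩
      show Continuous fun p : ↥I × ↥I => -F [hop p.1 p.2]
      have he : (fun p : ↥I × ↥I => -F [hop p.1 p.2]) = fun p : ↥I × ↥I => -F [p.1, p.2] := by
        funext p; rw [hopspec p.1 p.2]
      rw [he]; exact hF2c.neg
  obtain ⟨ρ₁, hρ₁1, hρ₁2, hρ₁c, _⟩ := inverse_pack hg₁m hg₁c
  have hcontJ : Continuous fun p : ↥I × ↥I => hop p.1 p.2 := by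
    have he : (fun p : ↥I × ↥I => hop p.1 p.2)
        = (ρ₁ ∘ fun p : ↥I × ↥I => g₁ (hop p.1 p.2)) := funext fun p => (hρ₁1 _).symm
    rw [he]
    exact hρ₁c.comp_continuous hs₁ (fun p => ⟨hop p.1 p.2, rfl⟩)
  have hcont2 : ∀ a, Continuous (hop a) := fun a =>
    hcontJ.comp (continuous_const.prodMk continuous_id)
  have hcont1 : ∀ b, Continuous fun a => hop a b := fun b =>
    hcontJ.comp (continuous_id.prodMk continuous_const)
  obtain ⟨x1, y1, hxy1⟩ : ∃ x1 y1 : ↥I, x1 < y1 := by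
    obtain ⟨u, v, huv⟩ := exists_pair_ne ↥I
    rcases huv.lt_or_gt with hlt | hlt
    exacts [⟨u, v, hlt⟩, ⟨v, u, hlt⟩]
  have hLmonoanti : ∀ a, StrictMono (hop a) ∨ StrictAnti (hop a) := fun a =>
    (hcont2 a).strictMono_of_inj (hopinj2 a)
  have hRmonoanti : ∀ b, StrictMono (fun a => hop a b) ∨ StrictAnti (fun a => hop a b) :=
    fun b => (hcont1 b).strictMono_of_inj (hopinj1 b)
  have hdj : ∀ {u v : ↥I}, ¬(u < v ∧ v < u) := fun hx => lt_asymm hx.1 hx.2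
  have hLdich : (∀ a, StrictMono (hop a)) ∨ (∀ a, StrictAnti (hop a)) := by
    have hcov : ∀ z : ↥I, z ∈ {z : ↥I | hop z x1 < hop z y1} ∨ z ∈ {z : ↥I | hop z y1 < hop z x1} := by
      intro z
      rcases lt_trichotomy (hop z x1) (hop z y1) with hlt | heq | hgt
      · exact Or.inl hlt
      · exact absurd (hopinj2 z heq) (ne_of_lt hxy1)
      · exact Or.inr hgt
    rcases hLmonoanti x1 with hm0 | ha0
    · left
      have hall := clopen_dichotomy (A := {z : ↥I | hop z x1 < hop z y1})
        (B := {z : ↥I | hop z y1 < hop z x1})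
        (isOpen_lt (hcont1 x1) (hcont1 y1)) (isOpen_lt (hcont1 y1) (hcont1 x1))
        (fun z hz => hdj ⟨hz.1, hz.2⟩) hcov (x := x1) (hm0 hxy1)
      intro a
      rcases hLmonoanti a with hm | ha
      · exact hm
      · exact absurd (hall a) (not_lt.mpr (le_of_lt (ha hxy1)))
    · right
      have hall := clopen_dichotomy (A := {z : ↥I | hop z y1 < hop z x1})
        (B := {z : ↥I | hop z x1 < hop z y1})
        (isOpen_lt (hcont1 y1) (hcont1 x1)) (isOpen_lt (hcont1 x1) (hcont1 y1))
        (fun z hz => hdj ⟨hz.1, hz.2⟩) (fun z => (hcov z).symm) (x := x1) (ha0 hxy1)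
      intro a
      rcases hLmonoanti a with hm | ha
      · exact absurd (hall a) (not_lt.mpr (le_of_lt (hm hxy1)))
      · exact ha
  have hRdich : (∀ b, StrictMono fun a => hop a b) ∨ (∀ b, StrictAnti fun a => hop a b) := by
    have hcov : ∀ z : ↥I, z ∈ {z : ↥I | hop x1 z < hop y1 z} ∨ z ∈ {z : ↥I | hop y1 z < hop x1 z} := by
      intro z
      rcases lt_trichotomy (hop x1 z) (hop y1 z) with hlt | heq | hgt
      · exact Or.inl hlt
      · exact absurd (hopinj1 z heq) (ne_of_lt hxy1)
      · exact Or.inr hgt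
    rcases hRmonoanti x1 with hm0 | ha0
    · left
      have hall := clopen_dichotomy (A := {z : ↥I | hop x1 z < hop y1 z})
        (B := {z : ↥I | hop y1 z < hop x1 z})
        (isOpen_lt (hcont2 x1) (hcont2 y1)) (isOpen_lt (hcont2 y1) (hcont2 x1))
        (fun z hz => hdj ⟨hz.1, hz.2⟩) hcov (x := x1) (hm0 hxy1)
      intro b
      rcases hRmonoanti b with hm | ha
      · exact hm
      · exact absurd (hall b) (not_lt.mpr (le_of_lt (ha hxy1)))
    · right
      have hall := clopen_dichotomy (A := {z : ↥I | hop y1 z < hop x1 z})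
        (B := {z : ↥I | hop x1 z < hop y1 z})
        (isOpen_lt (hcont2 y1) (hcont2 x1)) (isOpen_lt (hcont2 x1) (hcont2 y1))
        (fun z hz => hdj ⟨hz.1, hz.2⟩) (fun z => (hcov z).symm) (x := x1) (ha0 hxy1)
      intro b
      rcases hRmonoanti b with hm | ha
      · exact absurd (hall b) (not_lt.mpr (le_of_lt (hm hxy1)))
      · exact ha
  have hLmono : ∀ a, StrictMono (hop a) := by
    rcases hLdich with hgood | hbad
    · exact hgood
    · exfalso
      have h1 : hop x1 y1 < hop x1 x1 := hbad x1 hxy1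
      have h2 : hop x1 (hop x1 x1) < hop x1 (hop x1 y1) := hbad x1 h1
      rw [← hassoc, ← hassoc] at h2
      have h3 : hop (hop x1 x1) y1 < hop (hop x1 x1) x1 := hbad (hop x1 x1) hxy1
      exact lt_asymm h2 h3
  have hRmono : ∀ b, StrictMono fun a => hop a b := by
    rcases hRdich with hgood | hbad
    · exact hgood
    · exfalso
      have h1 : hop y1 x1 < hop x1 x1 := hbad x1 hxy1
      have h2 : hop (hop x1 x1) x1 < hop (hop y1 x1) x1 := hbad x1 h1
      rw [hassoc, hassoc] at h2
      have h3 : hop y1 (hop x1 x1) < hop x1 (hop x1 x1) := hbad (hop x1 x1) hxy1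
      exact lt_asymm h2 h3
  have G : Acz.ASemi hop := ⟨hassoc, hcont1, hcont2, hcontJ, hRmono, hLmono⟩
  obtain ⟨φ, hφm, hφc, hφhom⟩ := Acz.exists_rep G
  obtain ⟨ρ, hρa, hρb, hρc, hρm⟩ := inverse_pack hφm hφc
  refine ⟨Set.range φ, φ, fun t => F [ρ t], ?_, hφc, hφm, rfl, ?_, ?_, ?_, ?_⟩
  · refine classify_J ((isPreconnected_range hφc).ordConnected) ?_ ?_
    · exact ⟨φ x1, ⟨x1, rfl⟩, φ y1, ⟨y1, rfl⟩, ne_of_lt (hφm hxy1)⟩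
    · rintro _ ⟨u, rfl⟩ _ ⟨v, rfl⟩
      exact ⟨hop u v, hφhom u v⟩
  · exact hgc.comp_continuousOn hρc
  · rcases hgm with hmono | hanti
    · exact Or.inl fun s hs t ht hst => hmono (hρm hs ht hst)
    · exact Or.inr fun s hs t ht hst => hanti (hρm hs ht hst)
  · have fold1 : ∀ (l : List ↥I) (a : ↥I), F (a :: l) = F [l.foldl hop a] := by
      intro l
      induction l with
      | nil => intro a; rfl
      | cons b t ih =>
          intro a
          rw [List.foldl_cons, key1 a b t]
          exact ih (hop a b)
    have fold2 : ∀ (l : List ↥I) (a : ↥I), φ (l.foldl hop a) = φ a + (l.map φ).sum := by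
      intro l
      induction l with
      | nil => intro a; simp
      | cons b t ih =>
          intro a
          rw [List.foldl_cons, ih (hop a b), hφhom]
          simp [List.map_cons]
          ring
    intro l hl
    obtain ⟨a, l', rfl⟩ := List.exists_cons_of_ne_nil hl
    have hsum : ((a :: l').map φ).sum = φ (l'.foldl hop a) := by
      rw [fold2]
      simp
    rw [fold1 l' a, hsum]
    show F [l'.foldl hop a] = F [ρ (φ (l'.foldl hop a))]
    rw [hρa]
  · intro a
    show F [ρ (φ a)] = F [a]
    rw [hρa]

end ForwardGlue

section Backward

lemma sum_mem_form {J : Set ℝ}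
    (hform : (∃ b : ℝ, b ≤ 0 ∧ J = Set.Iio b) ∨ (∃ b : ℝ, b ≤ 0 ∧ J = Set.Iic b) ∨
      (∃ a : ℝ, 0 ≤ a ∧ J = Set.Ioi a) ∨ (∃ a : ℝ, 0 ≤ a ∧ J = Set.Ici a) ∨ J = Set.univ) :
    ∀ s ∈ J, ∀ t ∈ J, s + t ∈ J := by
  rcases hform with ⟨b, hb, rfl⟩ | ⟨b, hb, rfl⟩ | ⟨a, ha, rfl⟩ | ⟨a, ha, rfl⟩ | rfl
  · intro s hs t ht
    rw [Set.mem_Iio] at *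
    linarith
  · intro s hs t ht
    rw [Set.mem_Iic] at *
    linarith
  · intro s hs t ht
    rw [Set.mem_Ioi] at *
    linarith
  · intro s hs t ht
    rw [Set.mem_Ici] at *
    linarith
  · intro s _ t _
    trivial

lemma vlist_sum_mem {J : Set ℝ} (hadd : ∀ s ∈ J, ∀ t ∈ J, s + t ∈ J) :
    ∀ l : List ℝ, l ≠ [] → (∀ x ∈ l, x ∈ J) → l.sum ∈ J := by
  intro l
  induction l with
  | nil => intro hc; exact absurd rfl hc
  | cons x t ih =>
      intro _ hmem
      rcases eq_or_ne t [] with rfl | hne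
      · simpa using hmem x (by simp)
      · have hx : x ∈ J := hmem x (by simp)
        have ht : t.sum ∈ J := ih hne (fun y hy => hmem y (by simp [hy]))
        rw [List.sum_cons]
        exact hadd x hx t.sum ht

theorem backward_rep (I : Set ℝ)
    (F : List ↥I → ℝ) (hSt : VStandard F)
    (J : Set ℝ) (φ : ↥I → ℝ) (ψ : ℝ → ℝ)
    (hform : (∃ b : ℝ, b ≤ 0 ∧ J = Set.Iio b) ∨ (∃ b : ℝ, b ≤ 0 ∧ J = Set.Iic b) ∨
      (∃ a : ℝ, 0 ≤ a ∧ J = Set.Ioi a) ∨ (∃ a : ℝ, 0 ≤ a ∧ J = Set.Ici a) ∨ J = Set.univ)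
    (hφc : Continuous φ) (hφm : StrictMono φ) (hrange : Set.range φ = J)
    (hψc : ContinuousOn ψ J) (hψmono : StrictMonoOn ψ J ∨ StrictAntiOn ψ J)
    (hrep : ∀ l : List ↥I, l ≠ [] → F l = ψ (l.map φ).sum)
    (hψφ : ∀ a : ↥I, ψ (φ a) = F [a]) :
    VPreassoc F ∧ VUnQRI F ∧
      Continuous (fun a : ↥I => F [a]) ∧
      Function.Injective (fun a : ↥I => F [a]) ∧
      Continuous (fun p : ↥I × ↥I => F [p.1, p.2]) ∧
      (∀ a : ↥I, Function.Injective fun b : ↥I => F [a, b]) ∧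
      (∀ b : ↥I, Function.Injective fun a : ↥I => F [a, b]) := by
  have hadd : ∀ s ∈ J, ∀ t ∈ J, s + t ∈ J := sum_mem_form hform
  have hmemJ : ∀ a : ↥I, φ a ∈ J := fun a => hrange ▸ ⟨a, rfl⟩
  have hsumJ : ∀ l : List ↥I, l ≠ [] → (l.map φ).sum ∈ J := by
    intro l hl
    refine vlist_sum_mem hadd _ (by simpa using hl) ?_
    intro x hx
    rw [List.mem_map] at hx
    obtain ⟨a, _, rfl⟩ := hx
    exact hmemJ a
  have hψinj : Set.InjOn ψ J := by
    rcases hψmono with hm | hm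
    · exact hm.injOn
    · exact hm.injOn
  have hφinj : Function.Injective φ := hφm.injective
  refine ⟨?_, ?_, ?_, ?_, ?_, ?_, ?_⟩
  · -- VPreassoc
    intro x y y' z heq
    rcases eq_or_ne y [] with rfl | hy
    · have : y' = [] := hSt y' heq.symm
      rw [this]
    rcases eq_or_ne y' [] with rfl | hy'
    · have : y = [] := hSt y heq
      rw [this]
    have hs : (y.map φ).sum = (y'.map φ).sum := by
      refine hψinj (hsumJ y hy) (hsumJ y' hy') ?_
      rw [← hrep y hy, ← hrep y' hy']
      exact heq
    have h1 : x ++ y ++ z ≠ [] := by simp [hy]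
    have h2 : x ++ y' ++ z ≠ [] := by simp [hy']
    rw [hrep _ h1, hrep _ h2]
    congr 1
    simp only [List.map_append, List.sum_append]
    rw [hs]
  · -- VUnQRI
    apply Set.eq_of_subset_of_subset
    · rintro _ ⟨a, rfl⟩
      exact ⟨[a], by simp, rfl⟩
    · rintro v ⟨l, hl, rfl⟩
      have hmem : (l.map φ).sum ∈ Set.range φ := by rw [hrange]; exact hsumJ l hl
      obtain ⟨c, hc⟩ := hmem
      refine ⟨c, ?_⟩
      show F [c] = F l
      rw [← hψφ c, hc, ← hrep l hl]
  · -- continuity of F₁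
    have he : (fun a : ↥I => F [a]) = fun a => ψ (φ a) := funext fun a => (hψφ a).symm
    rw [he]
    exact hψc.comp_continuous hφc hmemJ
  · -- injectivity of F₁
    intro a b hab
    simp only at hab
    apply hφinj
    refine hψinj (hmemJ a) (hmemJ b) ?_
    rw [hψφ a, hψφ b]
    exact hab
  · -- continuity of F₂
    have he : (fun p : ↥I × ↥I => F [p.1, p.2]) = fun p => ψ (φ p.1 + φ p.2) := by
      funext p
      rw [hrep [p.1, p.2] (by simp)]
      simp
    rw [he]
    refine hψc.comp_continuous ?_ ?_
    · exact (hφc.comp continuous_fst).add (hφc.comp continuous_snd)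
    · exact fun p => hadd _ (hmemJ p.1) _ (hmemJ p.2)
  · -- injectivity in second arg
    intro a b b' hbb
    simp only at hbb
    have h1 : ψ (φ a + φ b) = ψ (φ a + φ b') := by
      have e1 : F [a, b] = ψ (φ a + φ b) := by rw [hrep [a, b] (by simp)]; simp
      have e2 : F [a, b'] = ψ (φ a + φ b') := by rw [hrep [a, b'] (by simp)]; simp
      rw [← e1, ← e2]
      exact hbb
    have h2 := hψinj (hadd _ (hmemJ a) _ (hmemJ b)) (hadd _ (hmemJ a) _ (hmemJ b')) h1
    exact hφinj (by linarith)
  · -- injectivity in first arg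
    intro b a a' haa
    simp only at haa
    have h1 : ψ (φ a + φ b) = ψ (φ a' + φ b) := by
      have e1 : F [a, b] = ψ (φ a + φ b) := by rw [hrep [a, b] (by simp)]; simp
      have e2 : F [a', b] = ψ (φ a' + φ b) := by rw [hrep [a', b] (by simp)]; simp
      rw [← e1, ← e2]
      exact haa
    have h2 := hψinj (hadd _ (hmemJ a) _ (hmemJ b)) (hadd _ (hmemJ a') _ (hmemJ b)) h1
    exact hφinj (by linarith)

end Backward


theorem stmt13 (I : Set ℝ) (hconn : I.OrdConnected)
    (hne : ∃ x ∈ I, ∃ y ∈ I, x ≠ y)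
    (F : List ↥I → ℝ) (hSt : VStandard F) :
    (VPreassoc F ∧ VUnQRI F ∧
        Continuous (fun a : ↥I => F [a]) ∧
        Function.Injective (fun a : ↥I => F [a]) ∧
        Continuous (fun p : ↥I × ↥I => F [p.1, p.2]) ∧
        (∀ a : ↥I, Function.Injective fun b : ↥I => F [a, b]) ∧
        (∀ b : ↥I, Function.Injective fun a : ↥I => F [a, b]))
    ↔
    ∃ (J : Set ℝ) (φ : ↥I → ℝ) (ψ : ℝ → ℝ),
      ((∃ b : ℝ, b ≤ 0 ∧ J = Set.Iio b) ∨ (∃ b : ℝ, b ≤ 0 ∧ J = Set.Iic b) ∨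
        (∃ a : ℝ, 0 ≤ a ∧ J = Set.Ioi a) ∨ (∃ a : ℝ, 0 ≤ a ∧ J = Set.Ici a) ∨
        J = Set.univ) ∧
      Continuous φ ∧ StrictMono φ ∧ Set.range φ = J ∧
      ContinuousOn ψ J ∧ (StrictMonoOn ψ J ∨ StrictAntiOn ψ J) ∧
      (∀ l : List ↥I, l ≠ [] → F l = ψ (l.map φ).sum) ∧
      (∀ a : ↥I, ψ (φ a) = F [a]) := by
  constructor
  · rintro ⟨h1, h2, h3, h4, h5, h6, h7⟩
    exact forward_rep I hconn hne F h1 h2 h3 h4 h5 h6 h7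
  · rintro ⟨J, φ, ψ, hform, hφc, hφm, hrange, hψc, hψmono, hrep, hψφ⟩
    exact backward_rep I F hSt J φ ψ hform hφc hφm hrange hψc hψmono hrep hψφ
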